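/- Let M be a d×d real Markov matrix such that every complex eigenvalue λ of M with |λ| = 1 satisfies λ = 1. Then the limit M∞ = lim_{n→∞} Mⁿ exists, M∞ is a Markov matrix, and the matrix R = M∞ − 1 (where 1 is the identity) is a Markov generator satisfying R² = −R. -/

import Mathlib

/-- A Markov matrix: nonnegative entries, each row sums to 1. -/
def IsMarkov {d : ℕ} (M : Matrix (Fin d) (Fin d) ℝ) : Prop :=
  (∀ i j, 0 ≤ M i j) ∧ ∀ i, ∑ j, M i j = 1

/-- A Markov generator (rate matrix): nonnegative off-diagonal entries,
each row sums to 0. -/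
def IsGenerator {d : ℕ} (Q : Matrix (Fin d) (Fin d) ℝ) : Prop :=
  (∀ i j, i ≠ j → 0 ≤ Q i j) ∧ ∀ i, ∑ j, Q i j = 0

open Filter Matrix Topology
open scoped ENNReal NNReal

lemma isMarkov_mul {d : ℕ} {M N : Matrix (Fin d) (Fin d) ℝ}
    (hM : IsMarkov M) (hN : IsMarkov N) : IsMarkov (M * N) := by
  constructor
  · intro i j
    rw [Matrix.mul_apply]
    exact Finset.sum_nonneg fun k _ => mul_nonneg (hM.1 i k) (hN.1 k j)
  · intro i
    simp only [Matrix.mul_apply]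
    rw [Finset.sum_comm]
    have : ∀ k ∈ Finset.univ, ∑ j, M i k * N k j = M i k := by
      intro k _
      rw [← Finset.mul_sum, hN.2 k, mul_one]
    rw [Finset.sum_congr rfl this, hM.2 i]

lemma isMarkov_one {d : ℕ} : IsMarkov (1 : Matrix (Fin d) (Fin d) ℝ) := by
  constructor
  · intro i j
    rcases eq_or_ne i j with rfl | h
    · simp
    · simp [Matrix.one_apply_ne h]
  · intro i
    simp [Matrix.one_apply]

lemma isMarkov_pow {d : ℕ} {M : Matrix (Fin d) (Fin d) ℝ} (hM : IsMarkov M) :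
    ∀ n : ℕ, IsMarkov (M ^ n) := by
  intro n
  induction n with
  | zero => simpa using isMarkov_one
  | succ n ih => rw [pow_succ]; exact isMarkov_mul ih hM


open scoped Topology in
/-- If every eigenvalue of an endomorphism of a finite-dimensional complex normed
space has modulus `< 1`, then its iterates tend to zero pointwise. -/
lemma aux_pow_tendsto_zero {E : Type*} [NormedAddCommGroup E] [NormedSpace ℂ E]
    [FiniteDimensional ℂ E] (B : Module.End ℂ E)
    (h : ∀ (z : ℂ) (v : E), v ≠ 0 → B v = z • v → ‖z‖ < 1) (x : E) :
    Filter.Tendsto (fun n : ℕ => (B ^ n) x) Filter.atTop (𝓝 0) := by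
  set Bc : E →L[ℂ] E := LinearMap.toContinuousLinearMap B with hBcdef
  have hBc_coe : ∀ y : E, Bc y = B y := fun _ => rfl
  have hBcpow : ∀ (n : ℕ) (y : E), (Bc ^ n) y = (B ^ n) y := by
    intro n
    induction n with
    | zero => intro y; simp
    | succ n ih =>
      intro y
      rw [pow_succ, ContinuousLinearMap.mul_apply, pow_succ, Module.End.mul_apply, ih, hBc_coe]
  have hspecB : ∀ z ∈ spectrum ℂ Bc, ‖z‖₊ < 1 := by
    intro z hz
    have hnu : ¬ IsUnit ((algebraMap ℂ (E →L[ℂ] E)) z - Bc) := hz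
    have hfun : ⇑((algebraMap ℂ (E →L[ℂ] E)) z - Bc) = ⇑(z • (1 : Module.End ℂ E) - B) := by
      funext y
      simp [Algebra.algebraMap_eq_smul_one, hBc_coe]
    have hnotinj : ¬ Function.Injective ⇑(z • (1 : Module.End ℂ E) - B) := by
      intro hinj
      apply hnu
      rw [ContinuousLinearMap.isUnit_iff_bijective, hfun]
      exact ⟨hinj, LinearMap.injective_iff_surjective.mp hinj⟩
    have hker : LinearMap.ker (z • (1 : Module.End ℂ E) - B) ≠ ⊥ := by
      intro h0
      exact hnotinj (LinearMap.ker_eq_bot.mp h0)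
    obtain ⟨v, hv, hv0⟩ := Submodule.exists_mem_ne_zero_of_ne_bot hker
    have hBv : B v = z • v := by
      have h1 : (z • (1 : Module.End ℂ E) - B) v = 0 := hv
      simp only [LinearMap.sub_apply, LinearMap.smul_apply, Module.End.one_apply] at h1
      rw [sub_eq_zero] at h1
      exact h1.symm
    have := h z v hv0 hBv
    rw [← NNReal.coe_lt_coe, coe_nnnorm, NNReal.coe_one]
    exact this
  have hrad : spectralRadius ℂ Bc < 1 := by
    rcases subsingleton_or_nontrivial (E →L[ℂ] E) with hs | hs
    · have h0 : spectralRadius ℂ Bc = 0 := spectrum.SpectralRadius.of_subsingleton Bc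
      rw [h0]
      exact zero_lt_one
    · have := spectrum.spectralRadius_lt_of_forall_lt_of_nonempty
        (spectrum.nonempty Bc) (r := 1) (fun k hk => hspecB k hk)
      simpa using this
  have hdecay : Filter.Tendsto (fun n : ℕ => ‖Bc ^ n‖) Filter.atTop (𝓝 0) := by
    obtain ⟨r, hr1, hr2⟩ := exists_between hrad
    have hgel := spectrum.pow_nnnorm_pow_one_div_tendsto_nhds_spectralRadius Bc
    have hev : ∀ᶠ n : ℕ in Filter.atTop, (‖Bc ^ n‖₊ : ℝ≥0∞) ^ (1 / (n : ℝ)) < r :=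
      hgel.eventually_lt_const hr1
    have hrne : r ≠ ⊤ := (hr2.trans ENNReal.one_lt_top).ne
    have hrt1 : r.toReal < 1 := by
      rw [← ENNReal.toReal_one]
      exact (ENNReal.toReal_lt_toReal hrne ENNReal.one_ne_top).mpr hr2
    refine squeeze_zero'
      (Filter.Eventually.of_forall fun n => ContinuousLinearMap.opNorm_nonneg _) ?_
      (tendsto_pow_atTop_nhds_zero_of_lt_one ENNReal.toReal_nonneg hrt1)
    filter_upwards [hev, Filter.eventually_ge_atTop 1] with n hn hn1
    have hne : (n : ℝ) ≠ 0 := Nat.cast_ne_zero.mpr (by omega)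
    have h3 : (‖Bc ^ n‖₊ : ℝ≥0∞) < r ^ n := by
      calc (‖Bc ^ n‖₊ : ℝ≥0∞)
          = ((‖Bc ^ n‖₊ : ℝ≥0∞) ^ (1 / (n : ℝ))) ^ (n : ℝ) := by
            rw [← ENNReal.rpow_mul, one_div, inv_mul_cancel₀ hne, ENNReal.rpow_one]
        _ < r ^ (n : ℝ) := ENNReal.rpow_lt_rpow hn (by positivity)
        _ = r ^ n := by rw [ENNReal.rpow_natCast]
    have h4 := ENNReal.toReal_mono (ENNReal.pow_ne_top hrne) h3.le
    simpa [ENNReal.toReal_pow] using h4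
  have hb : ∀ n : ℕ, ‖(B ^ n) x‖ ≤ ‖Bc ^ n‖ * ‖x‖ := by
    intro n
    rw [← hBcpow]
    exact ContinuousLinearMap.le_opNorm _ _
  refine squeeze_zero_norm hb ?_
  simpa using hdecay.mul_const ‖x‖

set_option maxHeartbeats 2000000 in
set_option synthInstance.maxHeartbeats 1000000 in
theorem markov_power_limit (d : ℕ) (M : Matrix (Fin d) (Fin d) ℝ)
    (hM : IsMarkov M)
    (hspec : ∀ lam ∈ spectrum ℂ (M.map (Complex.ofReal)),
      ‖lam‖ = 1 → lam = 1) :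
    ∃ Minf : Matrix (Fin d) (Fin d) ℝ,
      Filter.Tendsto (fun n : ℕ => M ^ n) Filter.atTop (nhds Minf) ∧
      IsMarkov Minf ∧ IsGenerator (Minf - 1) ∧
      (Minf - 1) * (Minf - 1) = -(Minf - 1) := by
  classical
  have hpow : ∀ n : ℕ, IsMarkov (M ^ n) := isMarkov_pow hM
  set A : Matrix (Fin d) (Fin d) ℂ := M.map Complex.ofReal with hAdef
  have hA : ∀ n : ℕ, A ^ n = (M ^ n).map Complex.ofReal := by
    intro n
    have h0 : A = Complex.ofRealHom.mapMatrix M := rfl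
    rw [h0, ← map_pow]
    rfl
  clear_value A
  set f : Module.End ℂ (Fin d → ℂ) := Matrix.toLinAlgEquiv' A with hfdef
  have hfpow : ∀ (n : ℕ) (v : Fin d → ℂ), (f ^ n) v = (A ^ n) *ᵥ v := by
    intro n v
    rw [hfdef, ← map_pow]
    exact Matrix.toLinAlgEquiv'_apply _ v
  clear_value f
  -- uniform boundedness of powers
  have hbound : ∀ (n : ℕ) (v : Fin d → ℂ), ‖(f ^ n) v‖ ≤ ‖v‖ := by
    intro n v
    rw [hfpow]
    rw [pi_norm_le_iff_of_nonneg (norm_nonneg v)]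
    intro i
    have h1 : ((A ^ n) *ᵥ v) i = ∑ k, ((M ^ n) i k : ℂ) * v k := by
      simp [Matrix.mulVec, dotProduct, hA n, Matrix.map_apply]
    rw [h1]
    calc ‖∑ k, ((M ^ n) i k : ℂ) * v k‖ ≤ ∑ k, ‖((M ^ n) i k : ℂ) * v k‖ :=
          norm_sum_le _ _
      _ = ∑ k, (M ^ n) i k * ‖v k‖ := by
          refine Finset.sum_congr rfl fun k _ => ?_
          rw [norm_mul, Complex.norm_real, Real.norm_of_nonneg ((hpow n).1 i k)]
      _ ≤ ∑ k, (M ^ n) i k * ‖v‖ :=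
          Finset.sum_le_sum fun k _ =>
            mul_le_mul_of_nonneg_left (norm_le_pi_norm v k) ((hpow n).1 i k)
      _ = ‖v‖ := by rw [← Finset.sum_mul, (hpow n).2 i, one_mul]
  set g : Module.End ℂ (Fin d → ℂ) := f - 1 with hgdef
  have hg_apply : ∀ v, g v = f v - v := by
    intro v
    simp [hgdef]
  clear_value g
  -- eigenvalue-1 generalized eigenvectors are genuine
  have hker2 : ∀ v, g (g v) = 0 → g v = 0 := by
    intro v hv
    set w := g v with hw
    have hfw : f w = w := by
      have h0 : f w - w = 0 := by rw [← hg_apply]; exact hv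
      have := sub_eq_zero.mp h0
      exact this
    have hfv : f v = v + w := by
      have : w = f v - v := hg_apply v
      rw [this]; abel
    have hstep : ∀ n : ℕ, (f ^ n) v = v + (n : ℂ) • w := by
      intro n
      induction n with
      | zero => simp
      | succ n ih =>
        rw [pow_succ', Module.End.mul_apply, ih, map_add, LinearMap.map_smul, hfw, hfv]
        push_cast
        module
    by_contra hne
    have hwne : w ≠ 0 := hne
    obtain ⟨j, hj⟩ : ∃ j, w j ≠ 0 := by
      by_contra hall
      push_neg at hall
      exact hwne (funext hall)
    have hwj : 0 < ‖w j‖ := norm_pos_iff.mpr hj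
    obtain ⟨n, hn⟩ := exists_nat_gt ((‖v‖ + ‖v j‖) / ‖w j‖)
    rw [div_lt_iff₀ hwj] at hn
    have h1 : ‖v j + (n : ℂ) * w j‖ ≤ ‖v‖ := by
      have hb := hbound n v
      rw [hstep n] at hb
      have h2 := norm_le_pi_norm (v + (n : ℂ) • w) j
      simp only [Pi.add_apply, Pi.smul_apply, smul_eq_mul] at h2
      exact h2.trans hb
    have h2 : (n : ℝ) * ‖w j‖ - ‖v j‖ ≤ ‖v j + (n : ℂ) * w j‖ := by
      have h3 := norm_sub_le (v j + (n : ℂ) * w j) (v j)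
      have h4 : v j + (n : ℂ) * w j - v j = (n : ℂ) * w j := by ring
      rw [h4, norm_mul, Complex.norm_natCast] at h3
      linarith
    linarith
  set K := LinearMap.ker g with hKdef
  set W := LinearMap.range g with hWdef
  clear_value K W
  have hdisj : Disjoint K W := by
    rw [Submodule.disjoint_def]
    intro x hxK hxW
    rw [hKdef, LinearMap.mem_ker] at hxK
    rw [hWdef] at hxW
    obtain ⟨y, rfl⟩ := hxW
    exact hker2 y hxK
  have hcompl : IsCompl K W := by
    refine ⟨hdisj, codisjoint_iff.2 ?_⟩
    apply Submodule.eq_top_of_disjoint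
    · rw [hKdef, hWdef, add_comm]
      exact (LinearMap.finrank_range_add_finrank_ker g).ge
    · exact hdisj
  have hKfix : ∀ x ∈ K, f x = x := by
    intro x hx
    rw [hKdef, LinearMap.mem_ker] at hx
    rw [hg_apply] at hx
    exact sub_eq_zero.mp hx
  have hWinv : ∀ x ∈ W, f x ∈ W := by
    intro x hx
    rw [hWdef] at hx ⊢
    obtain ⟨y, rfl⟩ := hx
    refine ⟨f y, ?_⟩
    rw [hg_apply, hg_apply, map_sub]
  set B : Module.End ℂ W := f.restrict hWinv with hBdef
  have hBcoe : ∀ x : W, ((B x : W) : Fin d → ℂ) = f x := fun x =>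
    LinearMap.restrict_coe_apply _ _ _
  clear_value B
  have hBapp : ∀ (n : ℕ) (x : W), (((B ^ n) x : W) : Fin d → ℂ) = (f ^ n) x := by
    intro n
    induction n with
    | zero => intro x; simp
    | succ n ih =>
      intro x
      rw [pow_succ, Module.End.mul_apply, pow_succ, Module.End.mul_apply, ih, hBcoe]
  -- the iterates of the restriction tend to zero
  have hBtend : ∀ y : W, Filter.Tendsto (fun n : ℕ => (((B ^ n) y : W) : Fin d → ℂ))
      Filter.atTop (𝓝 0) := by
    intro y
    have h0 : Filter.Tendsto (fun n : ℕ => ((B ^ n) y : W)) Filter.atTop (𝓝 0) := by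
      apply aux_pow_tendsto_zero B ?_ y
      intro z v hv0 hBv
      set u : Fin d → ℂ := (v : Fin d → ℂ) with hudef
      have hu0 : u ≠ 0 := by
        simpa [hudef, Submodule.coe_eq_zero] using hv0
      have hfu : f u = z • u := by
        have h1 : ((B v : W) : Fin d → ℂ) = f u := hBcoe v
        rw [hBv] at h1
        rw [← h1]
        rfl
      have h1 : ‖z‖ ≤ 1 := by
        have hb := hbound 1 u
        rw [pow_one, hfu, norm_smul] at hb
        have hu : 0 < ‖u‖ := norm_pos_iff.mpr hu0
        exact le_of_mul_le_mul_right (by linarith) hu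
      have h2 : ‖z‖ ≠ 1 := by
        intro habs
        have heig : Module.End.HasEigenvalue f z :=
          Module.End.hasEigenvalue_of_hasEigenvector
            ⟨Module.End.mem_eigenspace_iff.mpr hfu, hu0⟩
        have hzA : z ∈ spectrum ℂ A := by
          rw [← AlgEquiv.spectrum_eq (Matrix.toLinAlgEquiv' (n := Fin d) (R := ℂ)) A, ← hfdef]
          exact Module.End.hasEigenvalue_iff_mem_spectrum.mp heig
        have hz1 : z = 1 := hspec z hzA (by exact habs)
        rw [hz1, one_smul] at hfu
        have huK : u ∈ K := by
          rw [hKdef, LinearMap.mem_ker, hg_apply, hfu, sub_self]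
        have huW : u ∈ W := v.2
        exact hu0 (Submodule.disjoint_def.mp hdisj u huK huW)
      exact lt_of_le_of_ne h1 h2
    have hc : Filter.Tendsto (fun y : W => (y : Fin d → ℂ)) (𝓝 0) (𝓝 0) := by
      simpa using (continuous_subtype_val (p := fun x => x ∈ W)).tendsto (0 : W)
    exact hc.comp h0
    -- the projection onto K along W
  set proj : Module.End ℂ (Fin d → ℂ) :=
    K.subtype.comp (K.projectionOnto W hcompl) with hprojdef
  have hprojK : ∀ x, proj x ∈ K := fun x => Submodule.coe_mem _
  have hproj_add : ∀ (k : K) (w : W), proj ((k : Fin d → ℂ) + w) = k := by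
    intro k w
    rw [hprojdef]
    simp [Submodule.projectionOnto_apply_left, Submodule.projectionOnto_apply_right]
  clear_value proj
  have hsub : ∀ x, x - proj x ∈ W := by
    intro x
    obtain ⟨k, w, hx, -⟩ := Submodule.existsUnique_add_of_isCompl hcompl x
    rw [← hx, hproj_add]
    simpa using w.2
  -- pointwise convergence of iterates
  have hconv : ∀ x : Fin d → ℂ, Tendsto (fun n => (f ^ n) x) atTop (𝓝 (proj x)) := by
    intro x
    have hks : ∀ n : ℕ, (f ^ n) (proj x) = proj x := by
      intro n
      induction n with
      | zero => simp
      | succ n ih => rw [pow_succ', Module.End.mul_apply, ih, hKfix _ (hprojK x)]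
    have hx : ∀ n : ℕ, (f ^ n) x = proj x + (((B ^ n) ⟨x - proj x, hsub x⟩ : W) : Fin d → ℂ) := by
      intro n
      rw [hBapp n ⟨x - proj x, hsub x⟩]
      show (f ^ n) x = proj x + (f ^ n) (x - proj x)
      rw [map_sub, hks n]
      abel
    have h0 : Tendsto (fun _ : ℕ => proj x) atTop (𝓝 (proj x)) := tendsto_const_nhds
    have h1 := h0.add (hBtend ⟨x - proj x, hsub x⟩)
    rw [add_zero] at h1
    exact h1.congr fun n => (hx n).symm
  -- the limit matrix
  set Minf : Matrix (Fin d) (Fin d) ℝ :=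
    Matrix.of (fun i j => (proj (Pi.single j 1) i).re) with hMinfdef
  clear_value Minf
  have hentry : ∀ i j, Tendsto (fun n => (M ^ n) i j) atTop (𝓝 (Minf i j)) := by
    intro i j
    have h1 : Tendsto (fun n => (f ^ n) (Pi.single j 1) i) atTop
        (𝓝 (proj (Pi.single j 1) i)) :=
      ((continuous_apply i).tendsto _).comp (hconv (Pi.single j 1))
    have h2 : ∀ n : ℕ, (f ^ n) (Pi.single j (1 : ℂ)) i = ((M ^ n) i j : ℂ) := by
      intro n
      rw [hfpow, hA]
      simp [Matrix.mulVec, dotProduct, Pi.single_apply, Matrix.map_apply]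
    have h3 : Tendsto (fun n : ℕ => ((M ^ n) i j : ℂ)) atTop
        (𝓝 (proj (Pi.single j 1) i)) := h1.congr h2
    have h4 := (Complex.continuous_re.tendsto _).comp h3
    simpa [Function.comp_def, hMinfdef] using h4
  have htend : Tendsto (fun n : ℕ => M ^ n) atTop (𝓝 Minf) := by
    refine tendsto_pi_nhds.2 ?_
    intro i
    refine tendsto_pi_nhds.2 ?_
    intro j
    exact hentry i j
  -- limit is idempotent
  have hMM : Minf * Minf = Minf := by
    have hmono : StrictMono (fun n : ℕ => 2 * n) := fun a b h => by dsimp only; omega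
    have h2n : Tendsto (fun n : ℕ => M ^ (2 * n)) atTop (𝓝 Minf) :=
      htend.comp hmono.tendsto_atTop
    have h1 : Tendsto (fun n : ℕ => M ^ n * M ^ n) atTop (𝓝 Minf) := by
      refine h2n.congr fun n => ?_
      rw [← pow_add, two_mul]
    have hcont : Continuous (fun p : Matrix (Fin d) (Fin d) ℝ × Matrix (Fin d) (Fin d) ℝ =>
        p.1 * p.2) := (continuous_fst.matrix_mul continuous_snd)
    have h2 : Tendsto (fun n : ℕ => M ^ n * M ^ n) atTop (𝓝 (Minf * Minf)) :=
      (hcont.tendsto (Minf, Minf)).comp (htend.prodMk_nhds htend)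
    exact tendsto_nhds_unique h2 h1
  have hMarkov : IsMarkov Minf := by
    constructor
    · intro i j
      exact ge_of_tendsto (hentry i j) (Eventually.of_forall fun n => (hpow n).1 i j)
    · intro i
      have h1 : Tendsto (fun n : ℕ => ∑ j, (M ^ n) i j) atTop (𝓝 (∑ j, Minf i j)) :=
        tendsto_finset_sum _ fun j _ => hentry i j
      have h2 : (fun n : ℕ => ∑ j, (M ^ n) i j) = fun _ => (1 : ℝ) :=
        funext fun n => (hpow n).2 i
      rw [h2] at h1
      exact tendsto_nhds_unique h1 tendsto_const_nhds
  refine ⟨Minf, htend, hMarkov, ⟨?_, ?_⟩, ?_⟩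
  · intro i j hij
    have : (Minf - 1) i j = Minf i j := by
      simp [Matrix.sub_apply, Matrix.one_apply_ne hij]
    rw [this]
    exact hMarkov.1 i j
  · intro i
    have h1 : ∑ j, (Minf - 1) i j = ∑ j, Minf i j - ∑ j, (1 : Matrix (Fin d) (Fin d) ℝ) i j := by
      rw [← Finset.sum_sub_distrib]
      rfl
    rw [h1, hMarkov.2 i]
    simp [Matrix.one_apply]
  · have hexp : (Minf - 1) * (Minf - 1) = Minf * Minf - Minf - Minf + 1 := by
      noncomm_ring
    rw [hexp, hMM]
    noncomm_ring
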